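/- Let p ≠ q be primes, let f be the multiplicative order of p modulo q, and define the trace polynomial T_q(X) = ∑_{j=0}^{f−1} X^{p^j} over 𝔽_p. If gcd(Φ_q, T_q) is nonconstant in 𝔽_p[X], then X^q − 1 factors nontrivially in 𝔽_p[X;M], where M = ⟨2,3⟩. -/

import Mathlib

open Polynomial

/-- The subring `𝔽_p[X;M]` of `𝔽_p[X]` (for `M = ⟨2,3⟩`), consisting of
polynomials whose coefficient on `X^1` vanishes. -/
def MRing (p : ℕ) : Subring (Polynomial (ZMod p)) where
  carrier := {f | f.coeff 1 = 0}
  zero_mem' := by simp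
  one_mem' := by simp [Polynomial.coeff_one]
  add_mem' := by
    intro a b ha hb
    simp only [Set.mem_setOf_eq, Polynomial.coeff_add] at *
    simp [ha, hb]
  neg_mem' := by
    intro a ha
    simp only [Set.mem_setOf_eq, Polynomial.coeff_neg] at *
    simp [ha]
  mul_mem' := by
    intro a b ha hb
    simp only [Set.mem_setOf_eq] at *
    rw [Polynomial.coeff_mul, Finset.Nat.sum_antidiagonal_eq_sum_range_succ_mk]
    simp [Finset.sum_range_succ, ha, hb]


lemma trace_nextCoeff {p q f : ℕ} [hp : Fact p.Prime] (hq : q.Prime) (hpq : p ≠ q)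
    (hf : f = orderOf (p : ZMod q)) {d : Polynomial (ZMod p)} (hmonic : d.Monic)
    (hdc : d ∣ Polynomial.cyclotomic q (ZMod p))
    (hdT : d ∣ ∑ j ∈ Finset.range f, (X : Polynomial (ZMod p)) ^ p ^ j) :
    d.nextCoeff = 0 := by
  classical
  have hpq' : ¬ p ∣ q := fun h => hpq ((Nat.prime_dvd_prime_iff_eq hp.out hq).mp h)
  have hqp' : ¬ q ∣ p := fun h => hpq ((Nat.prime_dvd_prime_iff_eq hq hp.out).mp h).symm
  -- f positive
  haveI : NeZero q := ⟨hq.ne_zero⟩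
  have hpq0 : (p : ZMod q) ≠ 0 := fun h =>
    hqp' ((ZMod.natCast_eq_zero_iff p q).mp h)
  have hfpos : 0 < f := by
    haveI : Fact q.Prime := ⟨hq⟩
    lift (p : ZMod q) to (ZMod q)ˣ using (isUnit_iff_ne_zero.mpr hpq0) with u hu
    rw [hf, orderOf_units]
    exact orderOf_pos u
  have hpf : (p : ZMod q) ^ f = 1 := hf ▸ pow_orderOf_eq_one _
  -- p^f ≡ 1 mod q
  have hqdvd : ∀ m : ℕ, (p : ZMod q) ^ m = 1 → q ∣ p ^ m - 1 := by
    intro m hm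
    have h1 : ((p ^ m : ℕ) : ZMod q) = ((1 : ℕ) : ZMod q) := by push_cast; simpa using hm
    exact (Nat.modEq_iff_dvd' (Nat.one_le_pow _ _ hp.out.pos)).mp
      ((ZMod.natCast_eq_natCast_iff _ _ _).mp h1).symm
  obtain ⟨k, hk⟩ : ∃ k, p ^ f = q * k + 1 := by
    obtain ⟨k, hk⟩ := hqdvd f hpf
    have h1 : 1 ≤ p ^ f := Nat.one_le_pow _ _ hp.out.pos
    exact ⟨k, by rw [← hk]; omega⟩
  set K := AlgebraicClosure (ZMod p)
  set φ : ZMod p →+* K := algebraMap (ZMod p) K with hφ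
  haveI : CharP K p := charP_of_injective_algebraMap φ.injective p
  have hqK : (q : K) ≠ 0 := by
    rw [Ne, CharP.cast_eq_zero_iff K p q]; exact hpq'
  set D := d.map φ with hD
  have hd0 : d ≠ 0 := hmonic.ne_zero
  have hD0 : D ≠ 0 := by
    simpa [hD] using (Polynomial.map_ne_zero_iff φ.injective).mpr hd0
  have hDmonic : D.Monic := hmonic.map φ
  -- separability
  have hqZp : (q : ZMod p) ≠ 0 := by
    rw [Ne, ZMod.natCast_eq_zero_iff]; exact hpq'
  have hsepbig : (X ^ q - 1 : (ZMod p)[X]).Separable := by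
    have := Polynomial.separable_X_pow_sub_C (1 : ZMod p) hqZp one_ne_zero
    simpa using this
  have hdX : d ∣ (X ^ q - 1 : (ZMod p)[X]) :=
    dvd_trans hdc (Polynomial.cyclotomic.dvd_X_pow_sub_one q (ZMod p))
  have hdsep : d.Separable := hsepbig.of_dvd hdX
  have hDsep : D.Separable := hdsep.map
  have hnodup : D.roots.Nodup := nodup_roots hDsep
  set R : Finset K := ⟨D.roots, hnodup⟩ with hR
  have hmemR : ∀ {α : K}, α ∈ R ↔ D.eval α = 0 := by
    intro α
    constructor
    · intro h
      exact (Polynomial.mem_roots hD0).mp h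
    · intro h
      exact (Polynomial.mem_roots hD0).mpr h
  -- basic facts about roots
  have hDdvdX : D ∣ (X ^ q - 1 : K[X]) := by
    have := Polynomial.map_dvd φ hdX
    simpa [Polynomial.map_sub, Polynomial.map_pow] using this
  have hrq : ∀ α ∈ R, α ^ q = 1 := by
    intro α hα
    obtain ⟨c, hc⟩ := hDdvdX
    have := congrArg (Polynomial.eval α) hc
    simp [hmemR.mp hα] at this
    linear_combination this
  have hrne1 : ∀ α ∈ R, α ≠ 1 := by
    intro α hα h1
    have hdvdc : D ∣ Polynomial.cyclotomic q K := by
      have := Polynomial.map_dvd φ hdc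
      simpa [Polynomial.map_cyclotomic] using this
    obtain ⟨c, hc⟩ := hdvdc
    haveI : Fact q.Prime := ⟨hq⟩
    have heval := congrArg (Polynomial.eval 1) hc
    rw [Polynomial.eval_one_cyclotomic_prime (R := K) (p := q), Polynomial.eval_mul] at heval
    rw [h1] at hα
    rw [hmemR.mp hα, zero_mul] at heval
    exact hqK heval
  have horder : ∀ α ∈ R, orderOf α = q := by
    intro α hα
    haveI : Fact q.Prime := ⟨hq⟩
    exact orderOf_eq_prime (hrq α hα) (hrne1 α hα)
  have hroot0 : ∀ α ∈ R, α ≠ 0 := by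
    intro α hα h0
    have := hrq α hα
    rw [h0, zero_pow hq.ne_zero] at this
    exact zero_ne_one this
  have hTroot : ∀ α ∈ R, ∑ j ∈ Finset.range f, α ^ p ^ j = 0 := by
    intro α hα
    have hdvdT : D ∣ ∑ j ∈ Finset.range f, (X : K[X]) ^ p ^ j := by
      have := Polynomial.map_dvd φ hdT
      simpa [Polynomial.map_sum, Polynomial.map_pow] using this
    obtain ⟨c, hc⟩ := hdvdT
    have := congrArg (Polynomial.eval α) hc
    simp [hmemR.mp hα, Polynomial.eval_finset_sum] at this
    exact this
  -- Frobenius stability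
  have hDfix : D.map (frobenius K p) = D := by
    rw [hD, Polynomial.map_map]
    congr 1
    ext a : 1
    simp [frobenius_def, ← map_pow, ZMod.pow_card]
  have hfrob : ∀ α ∈ R, α ^ p ∈ R := by
    intro α hα
    rw [hmemR]
    have : D.eval (α ^ p) = (D.eval α) ^ p := by
      conv_lhs => rw [← hDfix]
      rw [show α ^ p = frobenius K p α from rfl, Polynomial.eval_map,
        Polynomial.eval₂_hom]
      rfl
    rw [this, hmemR.mp hα, zero_pow hp.out.ne_zero]
  have hfrobpow : ∀ α ∈ R, ∀ j : ℕ, α ^ p ^ j ∈ R := by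
    intro α hα j
    induction j with
    | zero => simpa using hα
    | succ n ih =>
      have := hfrob _ ih
      rwa [← pow_mul, ← pow_succ] at this
  -- periodicity: α ^ p ^ m depends only on m % f
  have hperiod1 : ∀ α ∈ R, α ^ p ^ f = α := by
    intro α hα
    rw [hk, pow_add, pow_mul, pow_one, hrq α hα, one_pow, one_mul]
  have hper : ∀ α ∈ R, ∀ s t : ℕ, α ^ p ^ (s + t * f) = α ^ p ^ s := by
    intro α hα s t
    induction t with
    | zero => simp
    | succ n ih =>
      have he : s + (n + 1) * f = f + (s + n * f) := by ring
      rw [he, pow_add, pow_mul, hperiod1 α hα]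
      exact ih
  have hmod : ∀ α ∈ R, ∀ m : ℕ, α ^ p ^ m = α ^ p ^ (m % f) := by
    intro α hα m
    conv_lhs => rw [show m = m % f + (m / f) * f by
      rw [mul_comm]; have := Nat.mod_add_div m f; omega]
    exact hper α hα _ _
  -- orbit
  set O : K → Finset K := fun α => (Finset.range f).image (fun j => α ^ p ^ j) with hO
  have hchar : ∀ α ∈ R, ∀ x : K, x ∈ O α ↔ ∃ m : ℕ, x = α ^ p ^ m := by
    intro α hα x
    constructor
    · rintro hx
      obtain ⟨j, _, rfl⟩ := Finset.mem_image.mp hx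
      exact ⟨j, rfl⟩
    · rintro ⟨m, rfl⟩
      refine Finset.mem_image.mpr ⟨m % f, Finset.mem_range.mpr (Nat.mod_lt _ hfpos), ?_⟩
      exact (hmod α hα m).symm
  have hself : ∀ α ∈ R, α ∈ O α := by
    intro α hα
    exact (hchar α hα α).mpr ⟨0, by simp⟩
  have hOsub : ∀ α ∈ R, O α ⊆ R := by
    intro α hα x hx
    obtain ⟨m, rfl⟩ := (hchar α hα x).mp hx
    exact hfrobpow α hα m
  have hOiter : ∀ α ∈ R, ∀ j : ℕ, O (α ^ p ^ j) = O α := by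
    intro α hα j
    have hβ : α ^ p ^ j ∈ R := hfrobpow α hα j
    ext x
    rw [hchar _ hβ, hchar α hα]
    constructor
    · rintro ⟨m, rfl⟩
      exact ⟨j + m, by rw [← pow_mul, ← pow_add]⟩
    · rintro ⟨m, rfl⟩
      refine ⟨m + f - j % f, ?_⟩
      rw [← pow_mul, ← pow_add]
      have hjf : j % f < f := Nat.mod_lt _ hfpos
      have hkey : j + (m + f - j % f) = m + (1 + j / f) * f := by
        rw [show (1 + j / f) * f = f + f * (j / f) by ring]
        have := Nat.mod_add_div j f
        omega
      rw [hkey, hper α hα m _]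
  -- injectivity on range f
  have hinj : ∀ α ∈ R, ∀ j ∈ Finset.range f, ∀ k ∈ Finset.range f,
      α ^ p ^ j = α ^ p ^ k → j = k := by
    have key : ∀ α ∈ R, ∀ j k, j ≤ k → k < f → α ^ p ^ j = α ^ p ^ k → j = k := by
      intro α hα j k hjk hkf he
      by_contra hne
      have hlt : 0 < k - j := by omega
      -- α ^ p ^ k = (α ^ p ^ (k - j)) ^ p ^ j
      have h2 : (α ^ p ^ (k - j)) ^ p ^ j = α ^ p ^ j := by
        rw [← pow_mul, ← pow_add]
        rw [show k - j + j = k by omega, he]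
      have h3 : α ^ p ^ (k - j) = α := by
        have hinjf : Function.Injective (iterateFrobenius K p j) :=
          (iterateFrobenius K p j).injective
        have := hinjf (a₁ := α ^ p ^ (k - j)) (a₂ := α) (by
          simp only [iterateFrobenius_def]; exact h2)
        exact this
      -- α ^ (p ^ (k - j) - 1) = 1
      have hppos : 1 ≤ p ^ (k - j) := Nat.one_le_pow _ _ hp.out.pos
      have h4 : α ^ (p ^ (k - j) - 1) = 1 := by
        have hα0 : α ≠ 0 := hroot0 α hα
        exact mul_right_cancel₀ hα0 (show α ^ (p ^ (k - j) - 1) * α = 1 * α by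
          rw [← pow_succ, Nat.sub_add_cancel hppos, h3, one_mul])
      have h5 : q ∣ p ^ (k - j) - 1 := by
        have := orderOf_dvd_of_pow_eq_one h4
        rwa [horder α hα] at this
      have h6 : (p : ZMod q) ^ (k - j) = 1 := by
        have h0 : ((p ^ (k - j) - 1 : ℕ) : ZMod q) = 0 :=
          (ZMod.natCast_eq_zero_iff _ _).mpr h5
        have h7 : ((p ^ (k - j) : ℕ) : ZMod q) = ((1 : ℕ) : ZMod q) := by
          calc ((p ^ (k - j) : ℕ) : ZMod q) = ((p ^ (k - j) - 1 + 1 : ℕ) : ZMod q) := by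
                rw [Nat.sub_add_cancel hppos]
            _ = ((p ^ (k - j) - 1 : ℕ) : ZMod q) + 1 := by push_cast; ring
            _ = ((1 : ℕ) : ZMod q) := by rw [h0]; simp
        push_cast at h7
        exact h7
      have h8 : f ∣ k - j := hf ▸ orderOf_dvd_of_pow_eq_one h6
      have : f ≤ k - j := Nat.le_of_dvd hlt h8
      omega
    intro α hα j hj k hk he
    rcases le_total j k with h | h
    · exact key α hα j k h (Finset.mem_range.mp hk) he
    · exact (key α hα k j h (Finset.mem_range.mp hj) he.symm).symm
  -- sum of roots is zero
  have hsum0 : D.roots.sum = 0 := by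
    have hRsum : ∑ α ∈ R, α = D.roots.sum := by
      rw [hR]
      show (Multiset.map (fun α => α) D.roots).sum = D.roots.sum
      rw [Multiset.map_id']
    rw [← hRsum]
    rw [← Finset.sum_fiberwise_of_maps_to (g := O) (t := R.image O)
      (fun α hα => Finset.mem_image_of_mem O hα) (fun α => α)]
    refine Finset.sum_eq_zero ?_
    intro b hb
    obtain ⟨α₀, hα₀, rfl⟩ := Finset.mem_image.mp hb
    have hfilter : {α ∈ R | O α = O α₀} = O α₀ := by
      ext β
      simp only [Finset.mem_filter]
      constructor
      · rintro ⟨hβR, hβO⟩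
        rw [← hβO]
        exact hself β hβR
      · intro hβ
        have hβR : β ∈ R := hOsub α₀ hα₀ hβ
        obtain ⟨m, rfl⟩ := (hchar α₀ hα₀ β).mp hβ
        exact ⟨hβR, hOiter α₀ hα₀ m⟩
    rw [hfilter, hO]
    rw [Finset.sum_image (by
      intro j hj k hk he
      exact hinj α₀ hα₀ j hj k hk he)]
    exact hTroot α₀ hα₀
  -- conclude
  have hnext : D.nextCoeff = 0 := by
    rw [(IsAlgClosed.splits D).nextCoeff_eq_neg_sum_roots_of_monic hDmonic, hsum0,
      neg_zero]
  rw [Polynomial.nextCoeff_map φ.injective] at hnext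
  exact φ.injective (by simpa using hnext)

/-- For primes `p ≠ q` and `f` the order of `p` mod `q`, if
`gcd(Φ_q, T_q)` is nonconstant in `𝔽_p[X]` (where `T_q = ∑_{j<f} X^{p^j}`), then
`X^q - 1` factors nontrivially in `𝔽_p[X;M]`. -/
theorem stmt8 (p q f : ℕ) [Fact p.Prime] (hq : q.Prime) (hpq : p ≠ q)
    (hf : f = orderOf (p : ZMod q))
    (hgcd : 0 < (EuclideanDomain.gcd (Polynomial.cyclotomic q (ZMod p))
      (∑ j ∈ Finset.range f, (X : Polynomial (ZMod p)) ^ p ^ j)).natDegree) :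
    ∃ g h : MRing p, ¬ IsUnit g ∧ ¬ IsUnit h ∧
      (X ^ q - 1 : Polynomial (ZMod p)) = (g : Polynomial (ZMod p)) * h := by
  classical
  set T : Polynomial (ZMod p) := ∑ j ∈ Finset.range f, (X : Polynomial (ZMod p)) ^ p ^ j with hT
  set d : Polynomial (ZMod p) := EuclideanDomain.gcd (Polynomial.cyclotomic q (ZMod p)) T with hdd
  have hd0 : d ≠ 0 := fun h => by rw [h] at hgcd; simp at hgcd
  have hlc : d.leadingCoeff ≠ 0 := leadingCoeff_ne_zero.mpr hd0
  set d' : Polynomial (ZMod p) := d * C d.leadingCoeff⁻¹ with hd'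
  have hd'monic : d'.Monic := monic_mul_leadingCoeff_inv hd0
  have hd'dvd_d : d' ∣ d := ⟨C d.leadingCoeff, by
    rw [hd', mul_assoc, ← C_mul, inv_mul_cancel₀ hlc, C_1, mul_one]⟩
  have hdc : d' ∣ Polynomial.cyclotomic q (ZMod p) :=
    dvd_trans hd'dvd_d (EuclideanDomain.gcd_dvd_left _ _)
  have hdT : d' ∣ T := dvd_trans hd'dvd_d (EuclideanDomain.gcd_dvd_right _ _)
  have hndeg : d'.natDegree = d.natDegree := by
    have hlcinv : d.leadingCoeff⁻¹ ≠ 0 := inv_ne_zero hlc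
    rw [hd', natDegree_mul hd0 (Polynomial.C_ne_zero.mpr hlcinv)]
    simp
  -- key: nextCoeff d' = 0
  have hnext : d'.nextCoeff = 0 := trace_nextCoeff hq hpq hf hd'monic hdc hdT
  have hN : 0 < d'.natDegree := by rw [hndeg]; exact hgcd
  -- d' divides X^q - 1
  have hdX : d' ∣ (X ^ q - 1 : Polynomial (ZMod p)) :=
    dvd_trans hdc (Polynomial.cyclotomic.dvd_X_pow_sub_one q (ZMod p))
  obtain ⟨e, he⟩ := hdX
  have hq2 : 2 ≤ q := hq.two_le
  have hXq : (X ^ q - 1 : Polynomial (ZMod p)).natDegree = q := by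
    have := Polynomial.natDegree_X_pow_sub_C (n := q) (r := (1 : ZMod p))
    simpa using this
  have hXq0 : (X ^ q - 1 : Polynomial (ZMod p)) ≠ 0 := fun h => by
    rw [h] at hXq; simp at hXq; omega
  have he0 : e ≠ 0 := fun h => hXq0 (by rw [he, h, mul_zero])
  have hd'0 : d' ≠ 0 := hd'monic.ne_zero
  -- trailing coefficient of d' is nonzero
  have hc0 : d'.coeff 0 ≠ 0 := by
    intro h0
    have := congrArg (Polynomial.eval 0) he
    rw [Polynomial.eval_mul] at this
    rw [Polynomial.coeff_zero_eq_eval_zero] at h0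
    rw [h0, zero_mul] at this
    simp [zero_pow hq.ne_zero] at this
  -- reverse
  set A : Polynomial (ZMod p) := d'.reverse with hA
  have hA1 : A.coeff 1 = 0 := by
    rw [hA, Polynomial.coeff_reverse, Polynomial.revAt_le hN]
    rw [Polynomial.nextCoeff, if_neg hN.ne'] at hnext
    exact hnext
  have hA0 : A.coeff 0 = 1 := by
    rw [hA, Polynomial.coeff_zero_reverse]
    exact hd'monic.leadingCoeff
  have hAne : A ≠ 0 := fun h => by rw [h] at hA0; simp at hA0
  -- reverse of X^q - 1
  have hrevX : (X ^ q - 1 : Polynomial (ZMod p)).reverse = 1 - X ^ q := by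
    rw [Polynomial.reverse, hXq]
    rw [show (X ^ q - 1 : Polynomial (ZMod p)) = X ^ q - C 1 by simp]
    rw [Polynomial.reflect_sub, Polynomial.reflect_monomial, Polynomial.reflect_C,
      Polynomial.revAt_le (le_refl q)]
    simp
  set B : Polynomial (ZMod p) := -e.reverse with hB
  have hfact : (X ^ q - 1 : Polynomial (ZMod p)) = A * B := by
    have h1 := congrArg Polynomial.reverse he
    rw [hrevX, Polynomial.reverse_mul_of_domain] at h1
    rw [hB, hA, mul_neg]
    rw [← h1]
    ring
  have hB0 : B ≠ 0 := fun h => hXq0 (by rw [hfact, h, mul_zero])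
  -- coeff 1 of B
  have hB1 : B.coeff 1 = 0 := by
    have h1 := congrArg (fun r => Polynomial.coeff r 1) hfact
    simp only [Polynomial.coeff_sub, Polynomial.coeff_one, Polynomial.coeff_X_pow] at h1
    rw [Polynomial.coeff_mul, Finset.Nat.sum_antidiagonal_eq_sum_range_succ_mk] at h1
    simp [Finset.sum_range_succ, hA0, hA1] at h1
    rw [if_neg (by omega : ¬ (1 = q))] at h1
    exact h1.symm
  -- degrees
  have hdegA : A.natDegree = d'.natDegree := by
    rw [hA, Polynomial.reverse_natDegree]
    have : d'.natTrailingDegree = 0 := by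
      rw [Polynomial.natTrailingDegree_eq_zero]
      exact Or.inr hc0
    omega
  have hdegsum : A.natDegree + B.natDegree = q := by
    rw [← hXq, hfact, Polynomial.natDegree_mul hAne hB0]
  have hdlt : d'.natDegree < q := by
    have h1 : d'.natDegree ≤ (Polynomial.cyclotomic q (ZMod p)).natDegree :=
      Polynomial.natDegree_le_of_dvd hdc (Polynomial.cyclotomic_ne_zero q (ZMod p))
    rw [Polynomial.natDegree_cyclotomic, Nat.totient_prime hq] at h1
    omega
  have hdegB : 0 < B.natDegree := by omega
  -- assemble
  refine ⟨⟨A, hA1⟩, ⟨B, hB1⟩, ?_, ?_, ?_⟩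
  · intro hu
    have : IsUnit A := hu.map (MRing p).subtype
    have := Polynomial.natDegree_eq_zero_of_isUnit this
    omega
  · intro hu
    have : IsUnit B := hu.map (MRing p).subtype
    have := Polynomial.natDegree_eq_zero_of_isUnit this
    omega
  · exact hfact
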